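/- arXiv:2202.08421 — 6 statements merged into one kernel-verified Lean document; each statement's English description precedes it below -/
import Mathlib

section
/- For a fixed real number λ, a nonnegative integer r, and integers 0 ≤ j ≤ n, the unsigned degenerate r-Stirling numbers of the first kind and the degenerate r-Stirling numbers of the second kind satisfy the orthogonality relation Σ_{k=j}^{n} (−1)^{n−k} · [n+r, k+r]_{r,λ} · {k+r, j+r}_{r,λ} = δ_{n,j}, where δ_{n,j} is the Kronecker delta. -/
open Finset

/-- The degenerate falling factorial `(x)_{n,λ} = x(x-λ)(x-2λ)⋯(x-(n-1)λ)`. -/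
noncomputable def degFall (lam x : ℝ) (n : ℕ) : ℝ := ∏ i ∈ Finset.range n, (x - i * lam)

/-- The degenerate rising factorial `⟨x⟩_{n,λ} = x(x+λ)(x+2λ)⋯(x+(n-1)λ)`. -/
noncomputable def degRise (lam x : ℝ) (n : ℕ) : ℝ := ∏ i ∈ Finset.range n, (x + i * lam)

lemma degRise_neg (lam x : ℝ) (k : ℕ) : degRise lam (-x) k = (-1)^k * degFall lam x k := by
  induction k with
  | zero => simp [degRise, degFall]
  | succ k ih =>
    unfold degRise degFall at *
    rw [Finset.prod_range_succ, Finset.prod_range_succ, ih]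
    ring

lemma degFall_nat_eq_zero (m i : ℕ) (h : m < i) : degFall 1 (m : ℝ) i = 0 := by
  apply Finset.prod_eq_zero (Finset.mem_range.2 h)
  ring

lemma degFall_nat_self_ne_zero (m : ℕ) : degFall 1 (m : ℝ) m ≠ 0 := by
  apply ne_of_gt
  apply Finset.prod_pos
  intro i hi
  have h1 : i < m := Finset.mem_range.1 hi
  have h2 : (i : ℝ) < m := by exact_mod_cast h1
  simp only [mul_one]
  linarith

lemma coeff_zero (N : ℕ) (c : ℕ → ℝ)
    (h : ∀ y : ℝ, ∑ i ∈ range N, c i * degFall 1 y i = 0) :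
    ∀ j, j < N → c j = 0 := by
  intro j
  induction j using Nat.strong_induction_on with
  | _ j ih =>
    intro hjN
    have hj := h (j : ℝ)
    rw [Finset.sum_eq_single_of_mem j (Finset.mem_range.2 hjN)] at hj
    · rcases mul_eq_zero.1 hj with h' | h'
      · exact h'
      · exact absurd h' (degFall_nat_self_ne_zero j)
    · intro b hb hbj
      rcases lt_or_gt_of_ne hbj with hb' | hb'
      · rw [ih b hb' (lt_trans hb' hjN)]; ring
      · rw [degFall_nat_eq_zero j b hb']; ring

/-- Orthogonality: `∑_{k=j}^{n} (−1)^{n−k} [n+r,k+r]_{r,λ} {k+r,j+r}_{r,λ} = δ_{n,j}`,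
where `S1 n k = [n+r,k+r]_{r,λ}` is characterized by
`⟨x+r⟩_n = ∑_{k=0}^n S1 n k ⟨x⟩_{k,λ}` and `S2 n k = {n+r,k+r}_{r,λ}` by
`(x+r)_{n,λ} = ∑_{k=0}^n S2 n k (x)_k`. -/
theorem orthogonality_first (lam : ℝ) (r : ℕ) (S1 S2 : ℕ → ℕ → ℝ)
    (hS1 : ∀ (n : ℕ) (x : ℝ),
      degRise 1 (x + r) n = ∑ k ∈ range (n + 1), S1 n k * degRise lam x k)
    (hS2 : ∀ (n : ℕ) (x : ℝ),
      degFall lam (x + r) n = ∑ k ∈ range (n + 1), S2 n k * degFall 1 x k)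
    (n j : ℕ) (hjn : j ≤ n) :
    ∑ k ∈ Finset.Icc j n, (-1 : ℝ) ^ (n - k) * S1 n k * S2 k j
      = if n = j then 1 else 0 := by
  have hsq : ∀ m : ℕ, ((-1:ℝ))^m * (-1)^m = 1 := by
    intro m
    rw [← pow_add, show m + m = 2*m by ring, pow_mul]
    norm_num
  -- Step A
  have stepA : ∀ x : ℝ, degFall 1 (x - r) n =
      ∑ k ∈ range (n+1), (-1:ℝ)^(n-k) * S1 n k * degFall lam x k := by
    intro x
    have h := hS1 n (-x)
    rw [show (-x + (r:ℝ)) = -(x - r) by ring, degRise_neg] at h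
    have h2 : ∑ k ∈ range (n+1), S1 n k * degRise lam (-x) k
        = ∑ k ∈ range (n+1), S1 n k * ((-1:ℝ)^k * degFall lam x k) := by
      apply Finset.sum_congr rfl
      intro k _
      rw [degRise_neg]
    rw [h2] at h
    have h3 : degFall 1 (x - r) n
        = (-1:ℝ)^n * ∑ k ∈ range (n+1), S1 n k * ((-1:ℝ)^k * degFall lam x k) := by
      rw [← h, ← mul_assoc, hsq, one_mul]
    rw [h3, Finset.mul_sum]
    apply Finset.sum_congr rfl
    intro k hk
    have hkn : k ≤ n := Nat.lt_succ_iff.1 (Finset.mem_range.1 hk)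
    have hsgn : ((-1:ℝ))^(n-k) = (-1)^n * (-1)^k := by
      rw [← pow_add, show n + k = (n - k) + 2*k by omega, pow_add, pow_mul]
      norm_num
    rw [hsgn]; ring
  -- combined identity
  set c : ℕ → ℝ := fun i => ∑ k ∈ Finset.Icc i n, (-1:ℝ)^(n-k) * S1 n k * S2 k i with hc
  have key : ∀ y : ℝ, degFall 1 y n = ∑ i ∈ range (n+1), c i * degFall 1 y i := by
    intro y
    have h := stepA (y + r)
    rw [add_sub_cancel_right] at h
    rw [h]
    have h2 : ∀ k ∈ range (n+1), (-1:ℝ)^(n-k) * S1 n k * degFall lam (y + r) k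
        = ∑ i ∈ range (n+1),
            (if i ≤ k then (-1:ℝ)^(n-k) * S1 n k * S2 k i else 0) * degFall 1 y i := by
      intro k hk
      have hkn : k ≤ n := Nat.lt_succ_iff.1 (Finset.mem_range.1 hk)
      rw [hS2 k y, Finset.mul_sum]
      have hfilter : Finset.filter (fun i => i ≤ k) (range (n+1)) = range (k+1) := by
        ext i
        simp only [Finset.mem_filter, Finset.mem_range, Nat.lt_succ_iff]
        omega
      rw [← hfilter, Finset.sum_filter]
      apply Finset.sum_congr rfl
      intro i _
      split <;> ring
    rw [Finset.sum_congr rfl h2, Finset.sum_comm]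
    apply Finset.sum_congr rfl
    intro i hi
    have hin : i ≤ n := Nat.lt_succ_iff.1 (Finset.mem_range.1 hi)
    rw [← Finset.sum_mul]
    congr 1
    have hfilter : Finset.filter (fun k => i ≤ k) (range (n+1)) = Finset.Icc i n := by
      ext k
      simp only [Finset.mem_filter, Finset.mem_range, Finset.mem_Icc, Nat.lt_succ_iff]
      omega
    show _ = ∑ k ∈ Finset.Icc i n, (-1:ℝ)^(n-k) * S1 n k * S2 k i
    rw [← hfilter, Finset.sum_filter]
  -- trivial expansion
  have triv : ∀ y : ℝ, degFall 1 y n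
      = ∑ i ∈ range (n+1), (if i = n then (1:ℝ) else 0) * degFall 1 y i := by
    intro y
    have hsplit : ∀ i ∈ range (n+1), (if i = n then (1:ℝ) else 0) * degFall 1 y i
        = if i = n then degFall 1 y i else 0 := by
      intro i _; split <;> simp
    rw [Finset.sum_congr rfl hsplit, Finset.sum_ite_eq' (range (n+1)) n (fun i => degFall 1 y i)]
    simp
  have hzero : ∀ y : ℝ, ∑ i ∈ range (n+1), (c i - (if i = n then (1:ℝ) else 0)) * degFall 1 y i = 0 := by
    intro y
    have := key y
    have := triv y
    simp only [sub_mul, Finset.sum_sub_distrib]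
    rw [← key y, ← triv y]
    ring
  have hcj := coeff_zero (n+1) _ hzero j (Nat.lt_succ_of_le hjn)
  have : c j = if j = n then 1 else 0 := by linarith [hcj]
  rw [hc] at this
  simp only at this
  rw [this]
  rcases eq_or_ne n j with h | h
  · simp [h]
  · simp [h, Ne.symm h]
end

section
/- For a fixed real number λ, a nonnegative integer r, and integers 0 ≤ j ≤ n, the degenerate r-Stirling numbers of the second kind and the unsigned degenerate r-Stirling numbers of the first kind satisfy the orthogonality relation Σ_{k=j}^{n} (−1)^{k−j} · {n+r, k+r}_{r,λ} · [k+r, j+r]_{r,λ} = δ_{n,j}, where δ_{n,j} is the Kronecker delta. -/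
open Finset

/-- The polynomial `(X)_{j,λ}`. -/
noncomputable def degFallPoly (lam : ℝ) (j : ℕ) : Polynomial ℝ :=
  ∏ i ∈ Finset.range j, (Polynomial.X - Polynomial.C (i * lam))

lemma degFallPoly_eval (lam x : ℝ) (j : ℕ) :
    (degFallPoly lam j).eval x = degFall lam x j := by
  simp [degFallPoly, degFall, Polynomial.eval_prod]

lemma degFallPoly_monic (lam : ℝ) (j : ℕ) : (degFallPoly lam j).Monic :=
  Polynomial.monic_prod_of_monic _ _ (fun i _ => Polynomial.monic_X_sub_C _)

lemma degFallPoly_natDegree (lam : ℝ) (j : ℕ) : (degFallPoly lam j).natDegree = j := by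
  rw [degFallPoly, Polynomial.natDegree_prod _ _ (fun i _ => Polynomial.X_sub_C_ne_zero _)]
  simp only [Polynomial.natDegree_X_sub_C, Finset.sum_const, Finset.card_range, smul_eq_mul,
    mul_one]

/-- Linear independence of the degenerate falling factorial polynomials. -/
lemma degFallPoly_indep (lam : ℝ) : ∀ (m : ℕ) (c : ℕ → ℝ),
    (∑ j ∈ range (m + 1), c j • degFallPoly lam j) = 0 → ∀ j ≤ m, c j = 0 := by
  intro m
  induction m with
  | zero =>
    intro c h j hj
    interval_cases j
    simpa [degFallPoly] using h
  | succ m ih =>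
    intro c h j hj
    have hcm : c (m + 1) = 0 := by
      have hco := congrArg (fun p => Polynomial.coeff p (m + 1)) h
      simp only [Polynomial.finset_sum_coeff, Polynomial.coeff_smul, Polynomial.coeff_zero,
        smul_eq_mul] at hco
      rw [Finset.sum_range_succ] at hco
      have h1 : (degFallPoly lam (m + 1)).coeff (m + 1) = 1 := by
        have := (degFallPoly_monic lam (m + 1)).coeff_natDegree
        rwa [degFallPoly_natDegree] at this
      have h2 : ∑ i ∈ range (m + 1), c i * (degFallPoly lam i).coeff (m + 1) = 0 := by
        apply Finset.sum_eq_zero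
        intro i hi
        rw [Polynomial.coeff_eq_zero_of_natDegree_lt, mul_zero]
        rw [degFallPoly_natDegree]
        exact Finset.mem_range.mp hi
      rw [h2, h1, zero_add, mul_one] at hco
      exact hco
    rcases Nat.lt_succ_iff_lt_or_eq.mp (Nat.lt_succ_of_le hj) with h' | h'
    · apply ih c _ j (Nat.lt_succ_iff.mp h')
      rw [Finset.sum_range_succ, hcm, zero_smul, add_zero] at h
      exact h
    · rw [h']; exact hcm
  
/-- Orthogonality: `∑_{k=j}^{n} (−1)^{k−j} {n+r,k+r}_{r,λ} [k+r,j+r]_{r,λ} = δ_{n,j}`. -/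
theorem orthogonality_second (lam : ℝ) (r : ℕ) (S1 S2 : ℕ → ℕ → ℝ)
    (hS1 : ∀ (n : ℕ) (x : ℝ),
      degRise 1 (x + r) n = ∑ k ∈ range (n + 1), S1 n k * degRise lam x k)
    (hS2 : ∀ (n : ℕ) (x : ℝ),
      degFall lam (x + r) n = ∑ k ∈ range (n + 1), S2 n k * degFall 1 x k)
    (n j : ℕ) (hjn : j ≤ n) :
    ∑ k ∈ Finset.Icc j n, (-1 : ℝ) ^ (k - j) * S2 n k * S1 k j
      = if n = j then 1 else 0 := by
  classical
  -- falling/rising relation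
  have hfr : ∀ (μ x : ℝ) (m : ℕ), degFall μ x m = (-1 : ℝ) ^ m * degRise μ (-x) m := by
    intro μ x m
    have hh : ∀ i ∈ range m, x - (i : ℝ) * μ = (-1) * (-x + i * μ) := fun i _ => by ring
    rw [degFall, degRise, Finset.prod_congr rfl hh, Finset.prod_mul_distrib,
      Finset.prod_const, Finset.card_range]
  -- step A: expand degFall 1 in terms of degFall lam shifted
  have hA : ∀ (k : ℕ) (y : ℝ),
      degFall 1 y k = ∑ i ∈ range (k + 1), (-1 : ℝ) ^ (k + i) * S1 k i * degFall lam (y + r) i := by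
    intro k y
    have h1 := hS1 k (-y - r)
    have e1 : (-y - r + r : ℝ) = -y := by ring
    rw [e1] at h1
    have e2 : degRise 1 (-y) k = (-1 : ℝ) ^ k * degFall 1 y k := by
      rw [hfr 1 y k, ← mul_assoc, ← pow_add]
      have hkk : (-1 : ℝ) ^ (k + k) = 1 := by
        rw [← two_mul, pow_mul]; norm_num
      rw [hkk, one_mul]
    have e3 : ∀ i : ℕ, degRise lam (-y - r) i = (-1 : ℝ) ^ i * degFall lam (y + r) i := by
      intro i
      have := hfr lam (y + r) i
      have e : (-(y + (r : ℝ))) = -y - r := by ring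
      rw [e] at this
      rw [this, ← mul_assoc, ← pow_add]
      have : (-1 : ℝ) ^ (i + i) = 1 := by
        rw [← two_mul, pow_mul]; norm_num
      rw [this, one_mul]
    rw [e2] at h1
    have h2 : degFall 1 y k = (-1 : ℝ) ^ k * ∑ i ∈ range (k + 1), S1 k i * degRise lam (-y - r) i := by
      rw [← h1, ← mul_assoc, ← pow_add]
      have : (-1 : ℝ) ^ (k + k) = 1 := by
        rw [← two_mul, pow_mul]; norm_num
      rw [this, one_mul]
    rw [h2, Finset.mul_sum]
    apply Finset.sum_congr rfl
    intro i _
    rw [e3 i, pow_add]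
    ring
  -- step B: the key functional identity
  set c : ℕ → ℝ := fun i => ∑ k ∈ Finset.Icc i n, (-1 : ℝ) ^ (k + i) * S2 n k * S1 k i with hc
  have hB : ∀ y : ℝ, degFall lam y n = ∑ i ∈ range (n + 1), c i * degFall lam y i := by
    intro y
    have h2 := hS2 n (y - r)
    have e : (y - r + r : ℝ) = y := by ring
    rw [e] at h2
    have e4 : ∀ i : ℝ, (y - r + r : ℝ) = y := fun _ => e
    calc degFall lam y n
        = ∑ k ∈ range (n + 1), S2 n k * degFall 1 (y - r) k := h2
      _ = ∑ k ∈ range (n + 1), ∑ i ∈ range (k + 1),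
            (-1 : ℝ) ^ (k + i) * S2 n k * S1 k i * degFall lam y i := by
          apply Finset.sum_congr rfl
          intro k _
          rw [hA k (y - r), Finset.mul_sum, e]
          apply Finset.sum_congr rfl
          intro i _
          ring
      _ = ∑ i ∈ range (n + 1), ∑ k ∈ Finset.Icc i n,
            (-1 : ℝ) ^ (k + i) * S2 n k * S1 k i * degFall lam y i := by
          apply Finset.sum_comm'
          intro x y'
          simp only [Finset.mem_range, Finset.mem_Icc, Nat.lt_succ_iff]
          omega
      _ = ∑ i ∈ range (n + 1), c i * degFall lam y i := by
          apply Finset.sum_congr rfl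
          intro i _
          rw [hc, Finset.sum_mul]
  -- polynomial identity
  have hpoly : (∑ i ∈ range (n + 1), c i • degFallPoly lam i) = degFallPoly lam n := by
    apply Polynomial.funext
    intro y
    rw [Polynomial.eval_finset_sum]
    simp only [Polynomial.eval_smul, smul_eq_mul, degFallPoly_eval]
    exact (hB y).symm
  have hzero : (∑ i ∈ range (n + 1), (c i - if i = n then 1 else 0) • degFallPoly lam i) = 0 := by
    simp only [sub_smul, ite_smul, one_smul, zero_smul, Finset.sum_sub_distrib]
    rw [hpoly, Finset.sum_ite_eq' (range (n + 1)) n (fun i => degFallPoly lam i)]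
    simp
  have hd := degFallPoly_indep lam n _ hzero j hjn
  have hcj : c j = if j = n then 1 else 0 := by linarith [hd]
  have hgoal : ∑ k ∈ Finset.Icc j n, (-1 : ℝ) ^ (k - j) * S2 n k * S1 k j = c j := by
    rw [hc]
    apply Finset.sum_congr rfl
    intro k hk
    have hjk : j ≤ k := (Finset.mem_Icc.mp hk).1
    have : (-1 : ℝ) ^ (k + j) = (-1 : ℝ) ^ (k - j) := by
      have e : k + j = (k - j) + 2 * j := by omega
      rw [e, pow_add, pow_mul]; norm_num
    rw [this]
  rw [hgoal, hcj]
  by_cases h : n = j <;> simp [h, eq_comm]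
end

section
/- Fix a real number λ and a nonnegative integer r. For each k ≥ 0, let β_{k,λ}(r) = Σ_{j=0}^{k} (−1)^j {k+r, j+r}_{r,λ} · j!/(j+1) (the value at r of the fully degenerate Bernoulli polynomial). Then for every n ≥ 0, n!/(n+1) = Σ_{k=0}^{n} (−1)^k [n+r, k+r]_{r,λ} β_{k,λ}(r). -/
open Finset

lemma degFall_neg (lam x : ℝ) (n : ℕ) :
    degFall lam (-x) n = (-1) ^ n * degRise lam x n := by
  unfold degFall degRise
  induction n with
  | zero => simp
  | succ n ih => rw [prod_range_succ, prod_range_succ, ih]; ring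

lemma degRise_eval_zero {j b : ℕ} (h : j < b) : degRise 1 (-(j : ℝ)) b = 0 := by
  unfold degRise
  apply Finset.prod_eq_zero (Finset.mem_range.mpr h)
  ring

lemma degRise_eval_ne_zero (j : ℕ) : degRise 1 (-(j : ℝ)) j ≠ 0 := by
  unfold degRise
  apply Finset.prod_ne_zero_iff.mpr
  intro i hi
  have hij : (i : ℝ) < j := by exact_mod_cast Finset.mem_range.mp hi
  have : -(j : ℝ) + i * 1 < 0 := by linarith
  exact ne_of_lt this

/-- Linear independence of the rising factorials. -/
lemma coeff_zero_s4 (n : ℕ) (c : ℕ → ℝ)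
    (h : ∀ x : ℝ, ∑ j ∈ range (n + 1), c j * degRise 1 x j = 0) :
    ∀ j, j ≤ n → c j = 0 := by
  intro j
  induction j using Nat.strong_induction_on with
  | _ j ih =>
    intro hj
    have hx := h (-(j : ℝ))
    have hsum : ∑ i ∈ range (n + 1), c i * degRise 1 (-(j : ℝ)) i
        = c j * degRise 1 (-(j : ℝ)) j := by
      apply Finset.sum_eq_single
      · intro b hb hbj
        rcases lt_or_gt_of_ne hbj with hlt | hgt
        · rw [ih b hlt (le_trans hlt.le hj)]; ring
        · rw [degRise_eval_zero hgt]; ring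
      · intro hjn
        exact absurd (Finset.mem_range.mpr (Nat.lt_succ_of_le hj)) hjn
    rw [hsum] at hx
    exact (mul_eq_zero.mp hx).resolve_right (degRise_eval_ne_zero j)

/-- With `β_{k,λ}(r) = ∑_{j=0}^{k} (−1)^j {k+r,j+r}_{r,λ} j!/(j+1)` (the fully degenerate
Bernoulli polynomial at `r`), we have `n!/(n+1) = ∑_{k=0}^{n} (−1)^k [n+r,k+r]_{r,λ} β_{k,λ}(r)`. -/
theorem fully_degenerate_bernoulli_identity (lam : ℝ) (r : ℕ) (S1 S2 : ℕ → ℕ → ℝ)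
    (hS1 : ∀ (n : ℕ) (x : ℝ),
      degRise 1 (x + r) n = ∑ k ∈ range (n + 1), S1 n k * degRise lam x k)
    (hS2 : ∀ (n : ℕ) (x : ℝ),
      degFall lam (x + r) n = ∑ k ∈ range (n + 1), S2 n k * degFall 1 x k)
    (β : ℕ → ℝ)
    (hβ : ∀ k : ℕ, β k = ∑ j ∈ range (k + 1), (-1 : ℝ) ^ j * S2 k j * (Nat.factorial j : ℝ) / (j + 1)) :
    ∀ n : ℕ, (Nat.factorial n : ℝ) / (n + 1) = ∑ k ∈ range (n + 1), (-1 : ℝ) ^ k * S1 n k * β k := by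
  -- key1: expand the degenerate rising factorial in the integer rising basis
  have key1 : ∀ (k : ℕ) (x : ℝ), degRise lam x k
      = ∑ j ∈ range (k + 1), (-1 : ℝ) ^ (k + j) * S2 k j * degRise 1 (x + r) j := by
    intro k x
    have h2 := hS2 k (-(x + r))
    rw [show -(x + (r : ℝ)) + r = -x by ring, degFall_neg] at h2
    have hpow : (-1 : ℝ) ^ k * (-1 : ℝ) ^ k = 1 := by
      rw [← pow_add, ← two_mul, pow_mul]; norm_num
    calc degRise lam x k = (-1 : ℝ) ^ k * ((-1 : ℝ) ^ k * degRise lam x k) := by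
          rw [← mul_assoc, hpow, one_mul]
      _ = (-1 : ℝ) ^ k * ∑ j ∈ range (k + 1), S2 k j * degFall 1 (-(x + r)) j := by rw [h2]
      _ = ∑ j ∈ range (k + 1), (-1 : ℝ) ^ (k + j) * S2 k j * degRise 1 (x + r) j := by
          rw [mul_sum]
          apply sum_congr rfl
          intro j _
          rw [degFall_neg 1 (x + r) j, pow_add]
          ring
  intro n
  set T : ℕ → ℕ → ℝ := fun k j => if j ≤ k then (-1 : ℝ) ^ (k + j) * S1 n k * S2 k j else 0
    with hT
  -- padding the triangular sum to a square sum
  have pad : ∀ k, k ≤ n → ∀ g : ℕ → ℝ,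
      ∑ j ∈ range (n + 1), T k j * g j
        = ∑ j ∈ range (k + 1), ((-1 : ℝ) ^ (k + j) * S1 n k * S2 k j) * g j := by
    intro k hk g
    have hsub : range (k + 1) ⊆ range (n + 1) := range_subset_range.mpr (by omega)
    rw [← sum_subset hsub (fun j _ hj => by
      have hnle : ¬ j ≤ k := fun h => hj (mem_range.mpr (by omega))
      simp [hT, hnle])]
    exact sum_congr rfl fun j hj => by
      have hle : j ≤ k := by have := mem_range.mp hj; omega
      simp [hT, hle]
  -- the combined expansion
  have key2 : ∀ x : ℝ, ∑ j ∈ range (n + 1),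
      ((∑ k ∈ range (n + 1), T k j) - (if j = n then 1 else 0)) * degRise 1 (x + r) j = 0 := by
    intro x
    have e1 : degRise 1 (x + r) n
        = ∑ j ∈ range (n + 1), (∑ k ∈ range (n + 1), T k j) * degRise 1 (x + r) j := by
      calc degRise 1 (x + r) n = ∑ k ∈ range (n + 1), S1 n k * degRise lam x k := hS1 n x
        _ = ∑ k ∈ range (n + 1), ∑ j ∈ range (n + 1), T k j * degRise 1 (x + r) j := by
            apply sum_congr rfl
            intro k hk
            have hk' : k ≤ n := by have := mem_range.mp hk; omega
            rw [pad k hk', key1 k x, mul_sum]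
            apply sum_congr rfl
            intro j _
            ring
        _ = ∑ j ∈ range (n + 1), (∑ k ∈ range (n + 1), T k j) * degRise 1 (x + r) j := by
            rw [sum_comm]
            exact sum_congr rfl fun j _ => (sum_mul _ _ _).symm
    have e2 : ∑ j ∈ range (n + 1), (if j = n then (1 : ℝ) else 0) * degRise 1 (x + r) j
        = degRise 1 (x + r) n := by
      rw [sum_eq_single n (fun b _ hb => by simp [hb])
        (fun h => absurd (self_mem_range_succ n) h)]
      simp
    simp only [sub_mul]
    rw [sum_sub_distrib, ← e1, e2, sub_self]
  have hzero : ∀ x : ℝ, ∑ j ∈ range (n + 1),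
      ((∑ k ∈ range (n + 1), T k j) - (if j = n then 1 else 0)) * degRise 1 x j = 0 := by
    intro x
    have h := key2 (x - r)
    rwa [show (x - (r : ℝ)) + r = x by ring] at h
  have delta : ∀ j, j ≤ n → ∑ k ∈ range (n + 1), T k j = (if j = n then 1 else 0) := by
    intro j hj
    have := coeff_zero_s4 n _ hzero j hj
    linarith [this]
  -- final computation
  calc (Nat.factorial n : ℝ) / (n + 1)
      = ∑ j ∈ range (n + 1), (if j = n then (1 : ℝ) else 0)
          * ((Nat.factorial j : ℝ) / (j + 1)) := by
        rw [sum_eq_single n (fun b _ hb => by simp [hb])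
          (fun h => absurd (self_mem_range_succ n) h)]
        simp
    _ = ∑ j ∈ range (n + 1), (∑ k ∈ range (n + 1), T k j)
          * ((Nat.factorial j : ℝ) / (j + 1)) := by
        apply sum_congr rfl
        intro j hj
        rw [delta j (by have := mem_range.mp hj; omega)]
    _ = ∑ k ∈ range (n + 1), ∑ j ∈ range (n + 1), T k j
          * ((Nat.factorial j : ℝ) / (j + 1)) := by
        rw [sum_comm]
        exact sum_congr rfl fun j _ => sum_mul _ _ _
    _ = ∑ k ∈ range (n + 1), (-1 : ℝ) ^ k * S1 n k * β k := by
        apply sum_congr rfl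
        intro k hk
        have hk' : k ≤ n := by have := mem_range.mp hk; omega
        rw [pad k hk', hβ k, mul_sum]
        apply sum_congr rfl
        intro j _
        rw [pow_add]
        ring
end

section
/- Fix a real number λ, a nonnegative integer r, and an integer p. For each k ≥ 0 let β^{(p)}_{k,λ}(−r) = (−1)^k Σ_{j=0}^{k} ( ∏_{i=1}^{j} (λ − i) ) · {k+r, j+r}_{r,λ} / (j+1)^p (the value at −r of the degenerate poly-Bernoulli polynomial of index p), where the empty product for j = 0 equals 1 and (j+1)^p denotes the integer power of the real number j+1. Then for every n ≥ 0, (−1)^n ( ∏_{i=1}^{n} (λ − i) ) / (n+1)^p = Σ_{k=0}^{n} [n+r, k+r]_{r,λ} β^{(p)}_{k,λ}(−r). -/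
open Finset

lemma degRise_eq_neg_degFall (lam x : ℝ) (k : ℕ) :
    degRise lam x k = (-1 : ℝ) ^ k * degFall lam (-x) k := by
  unfold degRise degFall
  have h : ∏ i ∈ Finset.range k, (x + i * lam)
      = ∏ i ∈ Finset.range k, ((-1 : ℝ) * (-x - i * lam)) :=
    Finset.prod_congr rfl fun i _ => by ring
  rw [h, Finset.prod_mul_distrib, Finset.prod_const, Finset.card_range]

lemma degFall_nat_ne_zero (j : ℕ) : degFall 1 (j : ℝ) j ≠ 0 := by
  unfold degFall
  refine ne_of_gt (Finset.prod_pos fun i hi => ?_)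
  have := Finset.mem_range.mp hi
  have : (i : ℝ) < j := by exact_mod_cast this
  linarith

lemma vanish (n : ℕ) (f : ℕ → ℝ)
    (h : ∀ m : ℕ, m ≤ n → ∑ j ∈ range (n + 1), f j * degFall 1 m j = 0) :
    ∀ j, j ≤ n → f j = 0 := by
  intro j
  induction j using Nat.strong_induction_on with
  | _ j ih =>
    intro hj
    have h1 := h j hj
    rw [Finset.sum_eq_single j (fun i hi hij => by
        rcases lt_or_gt_of_ne hij with hlt | hgt
        · rw [ih i hlt (le_trans (Nat.le_of_lt hlt) hj), zero_mul]
        · rw [degFall_nat_eq_zero j i hgt, mul_zero])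
      (fun habs => absurd (Finset.mem_range.mpr (Nat.lt_succ_of_le hj)) habs)] at h1
    exact (mul_eq_zero.mp h1).resolve_right (degFall_nat_ne_zero j)

/-- With `β^{(p)}_{k,λ}(−r) = (−1)^k ∑_{j=0}^{k} (∏_{i=1}^{j} (λ−i)) {k+r,j+r}_{r,λ} / (j+1)^p`
(the degenerate poly-Bernoulli polynomial of index `p` at `−r`), we have
`(−1)^n (∏_{i=1}^{n} (λ−i)) / (n+1)^p = ∑_{k=0}^{n} [n+r,k+r]_{r,λ} β^{(p)}_{k,λ}(−r)`. -/
theorem degenerate_poly_bernoulli_identity (lam : ℝ) (r : ℕ) (p : ℤ) (S1 S2 : ℕ → ℕ → ℝ)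
    (hS1 : ∀ (n : ℕ) (x : ℝ),
      degRise 1 (x + r) n = ∑ k ∈ range (n + 1), S1 n k * degRise lam x k)
    (hS2 : ∀ (n : ℕ) (x : ℝ),
      degFall lam (x + r) n = ∑ k ∈ range (n + 1), S2 n k * degFall 1 x k)
    (β : ℕ → ℝ)
    (hβ : ∀ k : ℕ, β k = (-1 : ℝ) ^ k *
      ∑ j ∈ range (k + 1),
        (∏ i ∈ Finset.Icc 1 j, (lam - (i : ℝ))) * S2 k j / ((j : ℝ) + 1) ^ p) :
    ∀ n : ℕ, (-1 : ℝ) ^ n * (∏ i ∈ Finset.Icc 1 n, (lam - (i : ℝ))) / ((n : ℝ) + 1) ^ p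
      = ∑ k ∈ range (n + 1), S1 n k * β k := by
  intro n
  set T : ℕ → ℝ := fun j =>
    ∑ k ∈ range (n + 1), S1 n k * (-1 : ℝ) ^ k * (if j ∈ range (k + 1) then S2 k j else 0)
    with hT_def
  -- the combined inversion identity
  have key : ∀ u : ℝ,
      ∑ j ∈ range (n + 1), T j * degFall 1 u j = (-1 : ℝ) ^ n * degFall 1 u n := by
    intro u
    have h1 := hS1 n (-u - r)
    rw [show (-u - (r : ℝ)) + r = -u by ring, degRise_eq_neg_degFall 1 (-u) n, neg_neg] at h1
    have h2 : ∀ k ∈ range (n + 1),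
        S1 n k * degRise lam (-u - r) k
          = ∑ j ∈ range (n + 1),
              (S1 n k * (-1 : ℝ) ^ k * (if j ∈ range (k + 1) then S2 k j else 0))
                * degFall 1 u j := by
      intro k hk
      rw [degRise_eq_neg_degFall, show -(-u - (r : ℝ)) = u + r by ring, hS2 k u]
      have hsub : range (k + 1) ⊆ range (n + 1) :=
        Finset.range_subset_range.mpr (by have := Finset.mem_range.mp hk; omega)
      rw [← Finset.sum_subset hsub (fun x _ hx => by simp [hx])]
      rw [Finset.mul_sum, Finset.mul_sum]
      exact Finset.sum_congr rfl fun j hj => by rw [if_pos hj]; ring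
    rw [Finset.sum_congr rfl h2, Finset.sum_comm] at h1
    rw [h1]
    exact Finset.sum_congr rfl fun j _ => by rw [Finset.sum_mul]
  -- deduce orthogonality
  have key0 : ∀ m : ℕ, m ≤ n →
      ∑ j ∈ range (n + 1),
        (T j - (if j = n then (-1 : ℝ) ^ n else 0)) * degFall 1 m j = 0 := by
    intro m hm
    have hk := key m
    have : ∑ j ∈ range (n + 1), (if j = n then (-1 : ℝ) ^ n else 0) * degFall 1 m j
        = (-1 : ℝ) ^ n * degFall 1 m n := by
      rw [Finset.sum_congr rfl fun j _ => (ite_mul _ _ _ _).trans (by rw [zero_mul])]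
      simp
    calc ∑ j ∈ range (n + 1),
          (T j - (if j = n then (-1 : ℝ) ^ n else 0)) * degFall 1 m j
        = (∑ j ∈ range (n + 1), T j * degFall 1 m j)
          - ∑ j ∈ range (n + 1), (if j = n then (-1 : ℝ) ^ n else 0) * degFall 1 m j := by
          rw [← Finset.sum_sub_distrib]
          exact Finset.sum_congr rfl fun j _ => by ring
      _ = 0 := by rw [hk, this, sub_self]
  have hT : ∀ j, j ≤ n → T j = if j = n then (-1 : ℝ) ^ n else 0 := fun j hj =>
    sub_eq_zero.mp (vanish n _ key0 j hj)
  -- now the main computation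
  have h3 : ∀ k ∈ range (n + 1),
      S1 n k * β k
        = ∑ j ∈ range (n + 1),
            (S1 n k * (-1 : ℝ) ^ k * (if j ∈ range (k + 1) then S2 k j else 0))
              * ((∏ i ∈ Finset.Icc 1 j, (lam - (i : ℝ))) / ((j : ℝ) + 1) ^ p) := by
    intro k hk
    rw [hβ k]
    have hsub : range (k + 1) ⊆ range (n + 1) :=
      Finset.range_subset_range.mpr (by have := Finset.mem_range.mp hk; omega)
    rw [← Finset.sum_subset hsub (fun x _ hx => by simp [hx])]
    rw [Finset.mul_sum, Finset.mul_sum]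
    exact Finset.sum_congr rfl fun j hj => by rw [if_pos hj]; ring
  rw [Finset.sum_congr rfl h3, Finset.sum_comm]
  have h4 : ∀ j ∈ range (n + 1),
      ∑ k ∈ range (n + 1),
          (S1 n k * (-1 : ℝ) ^ k * (if j ∈ range (k + 1) then S2 k j else 0))
            * ((∏ i ∈ Finset.Icc 1 j, (lam - (i : ℝ))) / ((j : ℝ) + 1) ^ p)
        = (if j = n then (-1 : ℝ) ^ n else 0)
            * ((∏ i ∈ Finset.Icc 1 j, (lam - (i : ℝ))) / ((j : ℝ) + 1) ^ p) := by
    intro j hj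
    rw [← Finset.sum_mul, ← hT j (Nat.lt_succ_iff.mp (Finset.mem_range.mp hj))]
  rw [Finset.sum_congr rfl h4]
  rw [Finset.sum_congr rfl fun j _ => (ite_mul _ _ _ _).trans (by rw [zero_mul])]
  simp [mul_div_assoc]
end

section
/- Fix a real number λ and let s be a positive integer. Define the degenerate harmonic numbers by H_{n,λ} = Σ_{k=1}^{n} (−1)^{k−1} (λ−1)(λ−2)···(λ−k+1)/k! for n ≥ 1 (empty product equal to 1 for k = 1) and H_{0,λ} = 0, and the degenerate hyperharmonic numbers by H^{(1)}_{n,λ} = H_{n,λ}, H^{(m)}_{0,λ} = 0 and H^{(m)}_{n,λ} = Σ_{k=1}^{n} H^{(m−1)}_{k,λ} for m ≥ 2 and n ≥ 1. Then in the ring ℝ[[t]] of formal power series, −(1 − t)^{−s} · log_λ(1 − t) = Σ_{n≥1} H^{(s)}_{n,λ} t^n, where (1 − t)^{−s} is the s-th power of the inverse of the unit 1 − t. -/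
open Finset PowerSeries

/-- The degenerate logarithm `log_λ(1+t) = ∑_{n≥1} (∏_{i=1}^{n-1}(λ−i)) tⁿ/n!`
as a formal power series. -/
noncomputable def degLog (lam : ℝ) : PowerSeries ℝ :=
  PowerSeries.mk fun n =>
    if n = 0 then 0
    else (∏ i ∈ Finset.Icc 1 (n - 1), (lam - (i : ℝ))) / (Nat.factorial n : ℝ)

/-- The degenerate harmonic numbers
`H_{n,λ} = ∑_{k=1}^{n} (−1)^{k−1} (λ−1)(λ−2)⋯(λ−k+1)/k!`, with `H_{0,λ} = 0`. -/
noncomputable def degHarmonic (lam : ℝ) (n : ℕ) : ℝ :=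
  ∑ k ∈ Finset.Icc 1 n,
    (-1 : ℝ) ^ (k - 1) * (∏ i ∈ Finset.Icc 1 (k - 1), (lam - (i : ℝ))) /
      (Nat.factorial k : ℝ)

/-- The degenerate hyperharmonic numbers: `H^{(1)}_{n,λ} = H_{n,λ}`, `H^{(m)}_{0,λ} = 0`, and
`H^{(m)}_{n,λ} = ∑_{k=1}^{n} H^{(m−1)}_{k,λ}` for `m ≥ 2`. -/
noncomputable def degHyperharmonic (lam : ℝ) : ℕ → ℕ → ℝ
  | 0, _ => 0
  | 1, n => degHarmonic lam n
  | m + 2, n => ∑ k ∈ Finset.Icc 1 n, degHyperharmonic lam (m + 1) k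

lemma constCoeff_one_sub_X : PowerSeries.constantCoeff (1 - PowerSeries.X : PowerSeries ℝ) ≠ 0 := by
  simp

lemma inv_one_sub_X_mul (f : ℕ → ℝ) :
    ((1 - PowerSeries.X : PowerSeries ℝ)⁻¹) * PowerSeries.mk f
      = PowerSeries.mk (fun n => ∑ k ∈ Finset.range (n + 1), f k) := by
  have h : (1 - PowerSeries.X : PowerSeries ℝ) *
      PowerSeries.mk (fun n => ∑ k ∈ Finset.range (n + 1), f k) = PowerSeries.mk f := by
    ext n
    rw [sub_mul, one_mul, map_sub]
    cases n with
    | zero => simp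
    | succ m =>
      rw [PowerSeries.coeff_succ_X_mul, PowerSeries.coeff_mk, PowerSeries.coeff_mk,
        PowerSeries.coeff_mk, Finset.sum_range_succ]
      ring
  calc ((1 - PowerSeries.X : PowerSeries ℝ)⁻¹) * PowerSeries.mk f
      = ((1 - PowerSeries.X : PowerSeries ℝ)⁻¹) * ((1 - PowerSeries.X) *
          PowerSeries.mk (fun n => ∑ k ∈ Finset.range (n + 1), f k)) := by rw [h]
    _ = _ := by
        rw [← mul_assoc, PowerSeries.inv_mul_cancel _ constCoeff_one_sub_X, one_mul]

lemma range_succ_eq_insert (n : ℕ) : Finset.range (n + 1) = insert 0 (Finset.Icc 1 n) := by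
  ext k; simp [Nat.lt_succ_iff]; omega

lemma degHyperharmonic_zero (lam : ℝ) (s : ℕ) : degHyperharmonic lam s 0 = 0 := by
  match s with
  | 0 => rfl
  | 1 => simp [degHyperharmonic, degHarmonic]
  | m + 2 => simp [degHyperharmonic]

/-- For a positive integer `s`, in `ℝ⟦t⟧` one has
`−(1−t)^{−s} log_λ(1−t) = ∑_{n≥1} H^{(s)}_{n,λ} tⁿ`, where `log_λ(1−t)` is `log_λ(1+t)`
with `−t` substituted for `t`. -/
theorem degenerate_hyperharmonic_generating (lam : ℝ) (s : ℕ) (hs : 1 ≤ s) :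
    -(((1 - PowerSeries.X : PowerSeries ℝ)⁻¹) ^ s *
        PowerSeries.rescale (-1 : ℝ) (degLog lam))
      = PowerSeries.mk fun n => degHyperharmonic lam s n := by
  induction s, hs using Nat.le_induction with
  | base =>
    have hres : -(PowerSeries.rescale (-1 : ℝ) (degLog lam))
        = PowerSeries.mk (fun n => -((-1 : ℝ) ^ n *
            (if n = 0 then 0
             else (∏ i ∈ Finset.Icc 1 (n - 1), (lam - (i : ℝ))) / (Nat.factorial n : ℝ)))) := by
      ext n
      rw [map_neg, PowerSeries.coeff_mk, PowerSeries.coeff_rescale]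
      simp [degLog]
    rw [pow_one, ← mul_neg, hres, inv_one_sub_X_mul]
    ext n
    rw [PowerSeries.coeff_mk, PowerSeries.coeff_mk]
    show _ = degHyperharmonic lam 1 n
    have h1 : degHyperharmonic lam 1 n = degHarmonic lam n := rfl
    rw [h1, range_succ_eq_insert, Finset.sum_insert (by simp), degHarmonic]
    simp only [if_true, mul_zero, neg_zero, zero_add]
    apply Finset.sum_congr rfl
    intro k hk
    obtain ⟨hk1, -⟩ := Finset.mem_Icc.mp hk
    obtain ⟨j, rfl⟩ := Nat.exists_eq_add_of_le hk1
    rw [if_neg (by omega)]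
    have : (1 + j) - 1 = j := by omega
    rw [this, pow_add, pow_one]
    ring
  | succ m hm ih =>
    have : -(((1 - PowerSeries.X : PowerSeries ℝ)⁻¹) ^ (m + 1) *
        PowerSeries.rescale (-1 : ℝ) (degLog lam))
        = ((1 - PowerSeries.X : PowerSeries ℝ)⁻¹) *
          -(((1 - PowerSeries.X : PowerSeries ℝ)⁻¹) ^ m *
            PowerSeries.rescale (-1 : ℝ) (degLog lam)) := by ring
    rw [this, ih, inv_one_sub_X_mul]
    ext n
    rw [PowerSeries.coeff_mk, PowerSeries.coeff_mk]
    obtain ⟨j, rfl⟩ := Nat.exists_eq_add_of_le hm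
    have h2 : degHyperharmonic lam (1 + j + 1) n
        = ∑ k ∈ Finset.Icc 1 n, degHyperharmonic lam (1 + j) k := by
      have : 1 + j + 1 = j + 2 := by omega
      rw [this]
      have : 1 + j = j + 1 := by omega
      rw [this]
      rfl
    rw [h2, range_succ_eq_insert, Finset.sum_insert (by simp), degHyperharmonic_zero, zero_add]
end

section
/- Fix a real number λ and let r be a positive integer. Define the degenerate Bernoulli numbers of the second kind at r by the identity t/log_λ(1+t) · (1+t)^r = Σ_{n≥0} b_{n,λ}(r) t^n/n! in ℝ[[t]], which determines b_{n,λ}(r) uniquely since log_λ(1+t)/t has constant term 1 and is hence invertible. Define the degenerate hyperharmonic numbers by H^{(1)}_{n,λ} = H_{n,λ} for n ≥ 1, H^{(1)}_{0,λ} = 0, and H^{(m)}_{0,λ} = 0, H^{(m)}_{n,λ} = Σ_{k=1}^{n} H^{(m−1)}_{k,λ} for m ≥ 2, n ≥ 1, where H_{n,λ} = Σ_{k=1}^{n} (−1)^{k−1} (λ−1)(λ−2)···(λ−k+1)/k!. Then for every n ≥ 0, Σ_{k=0}^{n} ((−1)^k/k!) b_{k,λ}(r) H^{(r)}_{n−k,λ}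 = δ_{n,1}, where δ_{n,1} is the Kronecker delta. -/
open Finset PowerSeries

/-- The unit power series `log_λ(1+t)/t = ∑_{n≥0} (∏_{i=1}^{n}(λ−i)) tⁿ/(n+1)!`, where
`log_λ(1+t) = ∑_{n≥1} (∏_{i=1}^{n-1}(λ−i)) tⁿ/n!` is the degenerate logarithm. Its constant
term is `1`, so it is invertible, and `t/log_λ(1+t)` is by definition its inverse. -/
noncomputable def degLogDivT (lam : ℝ) : PowerSeries ℝ :=
  PowerSeries.mk fun n =>
    (∏ i ∈ Finset.Icc 1 n, (lam - (i : ℝ))) / (Nat.factorial (n + 1) : ℝ)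

lemma rescale_one_add_X : rescale (-1 : ℝ) (1 + X) = 1 - X := by
  ext n
  simp [coeff_rescale, PowerSeries.coeff_one, PowerSeries.coeff_X]
  rcases n with _ | _ | n <;> simp

lemma harmonic_step (lam : ℝ) :
    (PowerSeries.mk fun n => degHarmonic lam n) * (1 - X)
      = X * rescale (-1) (degLogDivT lam) := by
  ext n
  rw [mul_sub, mul_one, map_sub]
  cases n with
  | zero => rw [mul_comm X]; simp [degHarmonic, PowerSeries.coeff_zero_mul_X]
  | succ n =>
      rw [PowerSeries.coeff_succ_mul_X, mul_comm X, PowerSeries.coeff_succ_mul_X]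
      simp only [coeff_mk, coeff_rescale, degLogDivT, degHarmonic]
      rw [Finset.sum_Icc_succ_top (by omega : 1 ≤ n + 1)]
      simp [Nat.factorial]
      ring

lemma hyper_step (lam : ℝ) (m : ℕ) :
    (PowerSeries.mk fun n => degHyperharmonic lam (m + 2) n) * (1 - X)
      = PowerSeries.mk fun n => degHyperharmonic lam (m + 1) n := by
  ext n
  rw [mul_sub, mul_one, map_sub]
  cases n with
  | zero =>
      simp [PowerSeries.coeff_zero_mul_X, degHyperharmonic]
      cases m <;> simp [degHyperharmonic, degHarmonic]
  | succ n =>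
      rw [PowerSeries.coeff_succ_mul_X]
      simp only [coeff_mk]
      show (∑ k ∈ Finset.Icc 1 (n+1), degHyperharmonic lam (m+1) k) -
        (∑ k ∈ Finset.Icc 1 n, degHyperharmonic lam (m+1) k) = _
      rw [Finset.sum_Icc_succ_top (by omega : 1 ≤ n + 1)]
      ring

lemma hyper_gen (lam : ℝ) : ∀ r : ℕ, 1 ≤ r →
    (PowerSeries.mk fun n => degHyperharmonic lam r n) * (1 - X) ^ r
      = X * rescale (-1) (degLogDivT lam) := by
  intro r
  induction r with
  | zero => omega
  | succ r ih =>
      intro _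
      rcases Nat.eq_or_lt_of_le (Nat.one_le_iff_ne_zero.mpr (by omega) : 1 ≤ r + 1) with h | h
      · rw [← h, pow_one]
        exact harmonic_step lam
      · have hr : 1 ≤ r := by omega
        obtain ⟨m, rfl⟩ : ∃ m, r = m + 1 := ⟨r - 1, by omega⟩
        rw [pow_succ, ← mul_assoc]
        calc (PowerSeries.mk fun n => degHyperharmonic lam (m + 2) n) * (1 - X) ^ (m+1) * (1 - X)
            = (PowerSeries.mk fun n => degHyperharmonic lam (m + 2) n) * (1 - X) * (1 - X) ^ (m+1) := by ring
          _ = (PowerSeries.mk fun n => degHyperharmonic lam (m + 1) n) * (1 - X) ^ (m+1) := by rw [hyper_step]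
          _ = _ := ih hr


/-- Let `r ≥ 1` and let `b_{n,λ}(r)` be the degenerate Bernoulli numbers of the second kind
at `r`, defined by `t/log_λ(1+t) · (1+t)^r = ∑_{n≥0} b_{n,λ}(r) tⁿ/n!`. Then for all `n ≥ 0`,
`∑_{k=0}^{n} ((−1)^k/k!) b_{k,λ}(r) H^{(r)}_{n−k,λ} = δ_{n,1}`. -/
theorem degenerate_bernoulli_second_hyperharmonic (lam : ℝ) (r : ℕ) (hr : 1 ≤ r)
    (b : ℕ → ℝ)
    (hb : (degLogDivT lam)⁻¹ * (1 + PowerSeries.X : PowerSeries ℝ) ^ r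
      = PowerSeries.mk fun n => b n / (Nat.factorial n : ℝ)) :
    ∀ n : ℕ, ∑ k ∈ range (n + 1),
        ((-1 : ℝ) ^ k / (Nat.factorial k : ℝ)) * b k * degHyperharmonic lam r (n - k)
      = if n = 1 then 1 else 0 := by
  have hA : constantCoeff (degLogDivT lam) = 1 := by
    simp [degLogDivT, ← PowerSeries.coeff_zero_eq_constantCoeff]
  set A := degLogDivT lam with hAdef
  set B := PowerSeries.mk fun n => b n / (Nat.factorial n : ℝ) with hBdef
  have hAB : A * B = (1 + X) ^ r := by
    rw [← hb, ← mul_assoc, PowerSeries.mul_inv_cancel _ (by rw [hA]; norm_num), one_mul]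
  -- apply rescale (-1)
  have hresc : rescale (-1 : ℝ) A * rescale (-1 : ℝ) B = (1 - X) ^ r := by
    rw [← map_mul, hAB, map_pow, rescale_one_add_X]
  set H := PowerSeries.mk fun n => degHyperharmonic lam r n with hHdef
  have hH : H * (1 - X) ^ r = X * rescale (-1) A := hyper_gen lam r hr
  have h1X : (1 - X : PowerSeries ℝ) ^ r ≠ 0 := by
    apply pow_ne_zero
    intro h
    have := congrArg (constantCoeff (R := ℝ)) h
    simp at this
  have key : rescale (-1 : ℝ) B * H = X := by
    apply mul_right_cancel₀ h1X
    calc rescale (-1 : ℝ) B * H * (1 - X) ^ r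
        = rescale (-1 : ℝ) B * (H * (1 - X) ^ r) := by ring
      _ = rescale (-1 : ℝ) B * (X * rescale (-1) A) := by rw [hH]
      _ = X * (rescale (-1 : ℝ) A * rescale (-1 : ℝ) B) := by ring
      _ = X * (1 - X) ^ r := by rw [hresc]
  intro n
  have := congrArg (PowerSeries.coeff (R := ℝ) n) key
  rw [PowerSeries.coeff_mul, PowerSeries.coeff_X,
    Finset.Nat.sum_antidiagonal_eq_sum_range_succ_mk] at this
  rw [← this]
  apply Finset.sum_congr rfl
  intro k _
  simp only [coeff_rescale, hBdef, hHdef, coeff_mk]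
  ring
end
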